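/- Let n ≥ 1 and let A be a 2n × 2n skew-symmetric matrix over ℚ (Aᵀ = -A) such that every off-diagonal entry of A is an odd rational. Then there exists an odd rational q with det A = q². In particular, det A ≠ 0. -/

import Mathlib

open Matrix

/-- A rational number is *odd* if it can be written as `a / b` with both `a` and `b`
odd integers. -/
def OddRat (q : ℚ) : Prop := ∃ a b : ℤ, Odd a ∧ Odd b ∧ q = (a : ℚ) / (b : ℚ)

/-- rationals with even numerator over odd denominator -/
def EvenRat (q : ℚ) : Prop := ∃ a b : ℤ, Even a ∧ Odd b ∧ q = (a : ℚ) / (b : ℚ)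

lemma Odd.int_ne_zero {b : ℤ} (h : Odd b) : b ≠ 0 := by
  rcases h with ⟨k, hk⟩; omega

lemma Odd.rat_cast_ne_zero {b : ℤ} (h : Odd b) : (b : ℚ) ≠ 0 := by
  exact_mod_cast h.int_ne_zero

lemma OddRat.ne_zero {q : ℚ} (h : OddRat q) : q ≠ 0 := by
  obtain ⟨a, b, ha, hb, rfl⟩ := h
  exact div_ne_zero ha.rat_cast_ne_zero hb.rat_cast_ne_zero

lemma OddRat.mul {q r : ℚ} (hq : OddRat q) (hr : OddRat r) : OddRat (q * r) := by
  obtain ⟨a, b, ha, hb, rfl⟩ := hq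
  obtain ⟨c, d, hc, hd, rfl⟩ := hr
  exact ⟨a * c, b * d, ha.mul hc, hb.mul hd, by push_cast; rw [div_mul_div_comm]⟩

lemma OddRat.sub_evenRat {q r : ℚ} (hq : OddRat q) (hr : OddRat r) : EvenRat (q - r) := by
  obtain ⟨a, b, ha, hb, rfl⟩ := hq
  obtain ⟨c, d, hc, hd, rfl⟩ := hr
  refine ⟨a * d - c * b, b * d, ?_, hb.mul hd, ?_⟩
  · rcases ha with ⟨x, hx⟩; rcases hc with ⟨y, hy⟩
    rcases hb with ⟨z, hz⟩; rcases hd with ⟨w, hw⟩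
    subst hx hy hz hw
    exact ⟨(2*x+1)*w + x - ((2*y+1)*z + y), by ring⟩
  · have hb' := hb.rat_cast_ne_zero
    have hd' := hd.rat_cast_ne_zero
    push_cast
    field_simp

lemma EvenRat.div_odd {q r : ℚ} (hq : EvenRat q) (hr : OddRat r) : EvenRat (q / r) := by
  obtain ⟨a, b, ha, hb, rfl⟩ := hq
  obtain ⟨c, d, hc, hd, rfl⟩ := hr
  refine ⟨a * d, b * c, ha.mul_right d, hb.mul hc, ?_⟩
  have hb' := hb.rat_cast_ne_zero
  have hc' := hc.rat_cast_ne_zero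
  have hd' := hd.rat_cast_ne_zero
  push_cast
  field_simp

lemma OddRat.sub_even {q r : ℚ} (hq : OddRat q) (hr : EvenRat r) : OddRat (q - r) := by
  obtain ⟨a, b, ha, hb, rfl⟩ := hq
  obtain ⟨c, d, hc, hd, rfl⟩ := hr
  refine ⟨a * d - c * b, b * d, ?_, hb.mul hd, ?_⟩
  · rcases ha with ⟨x, hx⟩; rcases hc with ⟨y, hy⟩
    rcases hd with ⟨w, hw⟩
    subst hx hy hw
    exact ⟨2*x*w + x + w - y*b, by push_cast; ring⟩
  · have hb' := hb.rat_cast_ne_zero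
    have hd' := hd.rat_cast_ne_zero
    push_cast
    field_simp

theorem aux : ∀ n : ℕ, ∀ A : Matrix (Fin (2*n)) (Fin (2*n)) ℚ,
    Aᵀ = -A → (∀ i j, i ≠ j → OddRat (A i j)) → ∃ q : ℚ, OddRat q ∧ A.det = q ^ 2 := by
  intro n
  induction n with
  | zero =>
    intro A _ _
    exact ⟨1, ⟨1, 1, odd_one, odd_one, by norm_num⟩, by simp [Matrix.det_isEmpty]⟩
  | succ n ih =>
    intro A hskew hodd
    -- reindex
    have e : Fin 2 ⊕ Fin (2*n) ≃ Fin (2*(n+1)) :=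
      finSumFinEquiv.trans (finCongr (by omega))
    set M : Matrix (Fin 2 ⊕ Fin (2*n)) (Fin 2 ⊕ Fin (2*n)) ℚ := A.submatrix e e with hM
    have hdetM : M.det = A.det := Matrix.det_submatrix_equiv_self e A
    have hMskew : ∀ i j, M j i = - M i j := by
      intro i j
      have := congrFun (congrFun hskew (e i)) (e j)
      simpa [hM, Matrix.transpose_apply] using this
    have hMdiag : ∀ i, M i i = 0 := by
      intro i; have := hMskew i i; linarith
    have hModd : ∀ i j, i ≠ j → OddRat (M i j) := by
      intro i j hij
      exact hodd (e i) (e j) (fun h => hij (e.injective h))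
    -- blocks
    set a : ℚ := M (Sum.inl 0) (Sum.inl 1) with ha
    have haodd : OddRat a := hModd _ _ (by simp)
    have hane : a ≠ 0 := haodd.ne_zero
    set B := M.toBlocks₁₁ with hB
    set C := M.toBlocks₁₂ with hC
    set D := M.toBlocks₂₁ with hD
    set E := M.toBlocks₂₂ with hE
    have hMblocks : fromBlocks B C D E = M := Matrix.fromBlocks_toBlocks M
    have hBval : B = !![0, a; -a, 0] := by
      have h10 : M (Sum.inl 1) (Sum.inl 0) = -a := hMskew _ _
      ext i j
      fin_cases i <;> fin_cases j <;>
        simp [hB, Matrix.toBlocks₁₁, hMdiag, h10, ha]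
    set Binv : Matrix (Fin 2) (Fin 2) ℚ := !![0, -a⁻¹; a⁻¹, 0] with hBinv
    have hBmul : B * Binv = 1 := by
      rw [hBval]
      ext i j
      fin_cases i <;> fin_cases j <;>
        simp [hBinv, Matrix.mul_apply, Fin.sum_univ_two, mul_inv_cancel₀ hane]
    have hBmul' : Binv * B = 1 := by
      rw [hBval]
      ext i j
      fin_cases i <;> fin_cases j <;>
        simp [hBinv, Matrix.mul_apply, Fin.sum_univ_two, inv_mul_cancel₀ hane]
    haveI : Invertible B := ⟨Binv, hBmul', hBmul⟩
    have hinvOf : ⅟B = Binv := invOf_eq_right_inv hBmul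
    -- determinant formula
    have hdet : M.det = B.det * (E - D * Binv * C).det := by
      rw [← hMblocks, Matrix.det_fromBlocks₁₁, hinvOf]
    have hdetB : B.det = a ^ 2 := by
      rw [hBval, Matrix.det_fin_two_of]; ring
    -- the Schur complement
    set S := E - D * Binv * C with hS
    have hSentry : ∀ i j, S i j = E i j - (D i 1 * C 0 j - D i 0 * C 1 j) / a := by
      intro i j
      simp only [hS, Matrix.sub_apply, Matrix.mul_apply, Fin.sum_univ_two, hBinv]
      norm_num
      field_simp
      ring
    -- skew-symmetry of the Schur complement
    have hEt : Eᵀ = -E := by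
      ext i j
      simpa [hE, Matrix.toBlocks₂₂] using hMskew (Sum.inr i) (Sum.inr j)
    have hCt : Cᵀ = -D := by
      ext i j
      simpa [hC, hD, Matrix.toBlocks₁₂, Matrix.toBlocks₂₁] using
        hMskew (Sum.inr i) (Sum.inl j)
    have hDt : Dᵀ = -C := by
      ext i j
      simpa [hC, hD, Matrix.toBlocks₁₂, Matrix.toBlocks₂₁] using
        hMskew (Sum.inl i) (Sum.inr j)
    have hBinvt : Binvᵀ = -Binv := by
      ext i j
      fin_cases i <;> fin_cases j <;> simp [hBinv]
    have hSskew : Sᵀ = -S := by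
      have : Sᵀ = Eᵀ - Cᵀ * Binvᵀ * Dᵀ := by
        rw [hS, Matrix.transpose_sub, Matrix.transpose_mul, Matrix.transpose_mul,
          Matrix.mul_assoc]
      rw [this, hEt, hCt, hDt, hBinvt, hS]
      simp only [Matrix.neg_mul, Matrix.mul_neg, neg_neg]
      abel
    -- oddness of the Schur complement off-diagonal
    have hSodd : ∀ i j, i ≠ j → OddRat (S i j) := by
      intro i j hij
      rw [hSentry]
      have hEodd : OddRat (E i j) := hModd (Sum.inr i) (Sum.inr j) (by simp [hij])
      have hDodd : ∀ k, OddRat (D i k) := fun k => hModd (Sum.inr i) (Sum.inl k) (by simp)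
      have hCodd : ∀ k, OddRat (C k j) := fun k => hModd (Sum.inl k) (Sum.inr j) (by simp)
      exact hEodd.sub_even
        ((((hDodd 1).mul (hCodd 0)).sub_evenRat ((hDodd 0).mul (hCodd 1))).div_odd haodd)
    obtain ⟨q', hq', hdetS⟩ := ih S hSskew hSodd
    refine ⟨a * q', haodd.mul hq', ?_⟩
    rw [← hdetM, hdet, hdetB, hdetS]
    ring

/-- Every `2n × 2n` skew-symmetric rational matrix all of whose off-diagonal entries are
odd rationals has determinant the square of an odd rational; in particular the
determinant is nonzero. -/
theorem det_of_odd_skew_symmetric_is_square_of_odd_rat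
    (n : ℕ) (hn : 1 ≤ n) (A : Matrix (Fin (2 * n)) (Fin (2 * n)) ℚ)
    (hskew : Aᵀ = -A) (hodd : ∀ i j : Fin (2 * n), i ≠ j → OddRat (A i j)) :
    ∃ q : ℚ, OddRat q ∧ A.det = q ^ 2 ∧ A.det ≠ 0 := by
  obtain ⟨q, hq, hdq⟩ := aux n A hskew hodd
  exact ⟨q, hq, hdq, by rw [hdq]; exact pow_ne_zero 2 hq.ne_zero⟩
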